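/- In a Coxeter group W with simple reflections indexed by S, an element w is the longest element of a finite standard parabolic subgroup W_J if and only if the join (least upper bound in right weak order) of the set of simple reflections {s_j : j ∈ J} exists and equals w; moreover if W_J is infinite, the set {s_j : j ∈ J} has no upper bound in weak order. -/

import Mathlib

open List CoxeterSystem
open scoped Classical

/-- The right weak Bruhat order on a Coxeter group: `u ≤ v` iff `ℓ(u) + ℓ(u⁻¹v) = ℓ(v)`. -/
noncomputable def rweakLE {B W : Type*} [Group W] {M : CoxeterMatrix B}
    (cs : CoxeterSystem M W) (u v : W) : Prop :=
  cs.length u + cs.length (u⁻¹ * v) = cs.length v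

/-- The standard parabolic subgroup `W_J` generated by the simple reflections in `J`. -/
def parabolic {B W : Type*} [Group W] {M : CoxeterMatrix B}
    (cs : CoxeterSystem M W) (J : Set B) : Subgroup W :=
  Subgroup.closure (cs.simple '' J)

namespace StrongExchangeAux

variable {B W : Type*} [Group W] {M : CoxeterMatrix B} (cs : CoxeterSystem M W)

local prefix:100 "s" => cs.simple
local prefix:100 "π" => cs.wordProd
local prefix:100 "ℓ" => cs.length

lemma conj_conj (i : B) (x : W) : s i * (s i * x * s i) * s i = x := by
  simp [mul_assoc, cs.simple_mul_simple_cancel_left, cs.simple_mul_simple_self]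

/-- underlying function of the permutation representation on W × ZMod 2 -/
noncomputable def ft (i : B) : W × ZMod 2 → W × ZMod 2 :=
  fun p => (s i * p.1 * s i, p.2 + (if p.1 = s i then 1 else 0))

lemma conj_eq_simple_iff (i : B) (x : W) : s i * x * s i = s i ↔ x = s i := by
  constructor
  · intro h
    have h2 := conj_conj cs i x
    rw [h] at h2
    rw [cs.simple_mul_simple_self, one_mul] at h2
    exact h2.symm
  · intro h
    rw [h]
    simp [mul_assoc, cs.simple_mul_simple_cancel_left]

lemma ft_invol (i : B) : Function.Involutive (ft cs i) := by
  intro p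
  unfold ft
  ext
  · exact conj_conj cs i p.1
  · simp only [conj_eq_simple_iff]
    rcases eq_or_ne p.1 (s i) with h | h
    · rw [if_pos h, add_assoc]
      have h3 : (1 + 1 : ZMod 2) = 0 := by decide
      rw [h3, add_zero]
    · simp [h]

/-- the permutation -/
noncomputable def fp (i : B) : Equiv.Perm (W × ZMod 2) := (ft_invol cs i).toPerm

lemma fp_apply (i : B) (p : W × ZMod 2) :
    fp cs i p = (s i * p.1 * s i, p.2 + (if p.1 = s i then 1 else 0)) := rfl

lemma eval (ω : List B) (t : W) (ε : ZMod 2) :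
    (List.map (fp cs) ω.reverse).prod (t, ε) =
      ((π ω)⁻¹ * t * π ω, ε + (List.count t (cs.leftInvSeq ω) : ZMod 2)) := by
  induction ω generalizing t ε with
  | nil => simp
  | cons i ω ih =>
    rw [List.reverse_cons, List.map_append, List.prod_append]
    have hcons : cs.leftInvSeq (i :: ω) =
        s i :: List.map (MulAut.conj (s i)) (cs.leftInvSeq ω) := rfl
    simp only [List.map_cons, List.map_nil, List.prod_cons, List.prod_nil, mul_one]
    have happ : ((List.map (fp cs) ω.reverse).prod * fp cs i) (t, ε)
        = (List.map (fp cs) ω.reverse).prod (fp cs i (t, ε)) := rfl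
    rw [happ, fp_apply, ih]
    have hconj : t = (MulAut.conj (s i)) (s i * t * s i) := by
      simp only [MulAut.conj_apply, cs.inv_simple]
      rw [conj_conj]
    have hcount : List.count t (cs.leftInvSeq (i :: ω))
        = (List.count (s i * t * s i) (cs.leftInvSeq ω)) + (if t = s i then 1 else 0) := by
      rw [hcons, List.count_cons]
      congr 1
      rw [hconj, List.count_map_of_injective _ _ (MulAut.conj (s i)).injective]
      rw [← hconj]
      rcases eq_or_ne t (s i) with h | h
      · rw [h]
        simp
      · rw [if_neg h, if_neg (by simpa [beq_iff_eq] using Ne.symm h)]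
    ext
    · simp [cs.wordProd_cons, mul_assoc]
    · simp only [hcount]
      push_cast
      ring

lemma sj_pow (i j : B) (a : ℕ) : s j * (s i * s j) ^ a = (s j * s i) ^ a * s j := by
  induction a with
  | zero => simp
  | succ a ih =>
    rw [pow_succ, ← mul_assoc, ih, pow_succ]
    group

lemma inv_q_pow (i j : B) (a : ℕ) : ((s i * s j) ^ a)⁻¹ = (s j * s i) ^ a := by
  rw [← inv_pow, mul_inv_rev, cs.inv_simple, cs.inv_simple]

lemma key_conj (i j : B) (a b : ℕ) :
    ((s i * s j) ^ a)⁻¹ * (s j * (s i * s j) ^ b) = (s j * s i) ^ (a + b) * s j := by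
  rw [sj_pow, inv_q_pow, ← mul_assoc, ← pow_add]

lemma head_formula (i j : B) (m : ℕ) :
    (π (CoxeterSystem.alternatingWord i j m))⁻¹ * π (CoxeterSystem.alternatingWord i j (m + 1))
      = (s j * s i) ^ m * s j := by
  rcases Nat.even_or_odd m with he | ho
  · have h1 : π (CoxeterSystem.alternatingWord i j m) = (s i * s j) ^ (m / 2) := by
      rw [cs.prod_alternatingWord_eq_mul_pow, if_pos he, one_mul]
    have h2 : π (CoxeterSystem.alternatingWord i j (m + 1))
        = s j * (s i * s j) ^ ((m + 1) / 2) := by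
      rw [cs.prod_alternatingWord_eq_mul_pow,
        if_neg (by simp [Nat.even_add_one, he])]
    rw [h1, h2, key_conj]
    obtain ⟨a, ha⟩ := he
    have hd : m / 2 + (m + 1) / 2 = m := by omega
    rw [hd]
  · have h1 : π (CoxeterSystem.alternatingWord i j m) = s j * (s i * s j) ^ (m / 2) := by
      rw [cs.prod_alternatingWord_eq_mul_pow, if_neg (by simpa using ho)]
    have h2 : π (CoxeterSystem.alternatingWord i j (m + 1))
        = (s i * s j) ^ ((m + 1) / 2) := by
      rw [cs.prod_alternatingWord_eq_mul_pow,
        if_pos (by simpa [Nat.even_add_one] using ho), one_mul]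
    obtain ⟨a, ha⟩ := ho
    have hm2 : m / 2 = a := by omega
    have hm3 : (m + 1) / 2 = a + 1 := by omega
    rw [h1, h2, mul_inv_rev, inv_q_pow, cs.inv_simple, hm2, hm3]
    rw [mul_assoc, sj_pow, ← mul_assoc, ← pow_add]
    have hd : a + (a + 1) = m := by omega
    rw [hd]

lemma count_ris_alt (i j : B) (m : ℕ) (t : W) :
    List.count t (cs.rightInvSeq (CoxeterSystem.alternatingWord i j m))
      = List.count t ((List.range m).map (fun k => (s j * s i) ^ k * s j)) := by
  induction m with
  | zero => simp [CoxeterSystem.alternatingWord]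
  | succ m ih =>
    rw [CoxeterSystem.alternatingWord_succ' i j m]
    have hcons : cs.rightInvSeq ((if Even m then j else i) :: CoxeterSystem.alternatingWord i j m)
        = ((π (CoxeterSystem.alternatingWord i j m))⁻¹ * s (if Even m then j else i)
            * π (CoxeterSystem.alternatingWord i j m)) :: cs.rightInvSeq (CoxeterSystem.alternatingWord i j m) := rfl
    have hhead : (π (CoxeterSystem.alternatingWord i j m))⁻¹ * s (if Even m then j else i)
            * π (CoxeterSystem.alternatingWord i j m) = (s j * s i) ^ m * s j := by
      rw [mul_assoc, ← head_formula cs i j m, CoxeterSystem.alternatingWord_succ' i j m,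
        cs.wordProd_cons, ← mul_assoc]
    rw [hcons, hhead, List.count_cons, ih, List.range_succ, List.map_append, List.count_append]
    congr 1
    rcases eq_or_ne ((s j * s i) ^ m * s j) t with h | h <;> simp [List.count_cons, h]

lemma prodmap_alt (i j : B) (m : ℕ) :
    (List.map (fp cs) (CoxeterSystem.alternatingWord i j (2 * m))).prod
      = (fp cs i * fp cs j) ^ m := by
  induction m with
  | zero => simp [CoxeterSystem.alternatingWord]
  | succ m ih =>
    have h1 : 2 * (m + 1) = (2 * m + 1) + 1 := by omega
    rw [h1, CoxeterSystem.alternatingWord_succ' i j (2 * m + 1),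
      CoxeterSystem.alternatingWord_succ' i j (2 * m),
      if_neg (by simp [Nat.even_add_one]), if_pos (by simp)]
    rw [List.map_cons, List.map_cons, List.prod_cons, List.prod_cons, ih, pow_succ']
    rw [← mul_assoc]

lemma lift_cond : M.IsLiftable (fp cs) := by
  intro i j
  apply Equiv.ext
  rintro ⟨t, ε⟩
  rw [← prodmap_alt cs i j (M i j)]
  have hrev : CoxeterSystem.alternatingWord i j (2 * M i j)
      = ((CoxeterSystem.alternatingWord i j (2 * M i j)).reverse).reverse := by
    rw [List.reverse_reverse]
  rw [hrev, eval]
  have hprod : π ((CoxeterSystem.alternatingWord i j (2 * M i j)).reverse) = 1 := by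
    rw [cs.wordProd_reverse]
    have : π (CoxeterSystem.alternatingWord i j (2 * M i j)) = 1 := by
      rw [cs.prod_alternatingWord_eq_mul_pow, if_pos (by simp [Nat.even_mul]),
        one_mul]
      have : 2 * M i j / 2 = M i j := by omega
      rw [this, cs.simple_mul_simple_pow]
    rw [this, inv_one]
  have hcount : (List.count t (cs.leftInvSeq
      ((CoxeterSystem.alternatingWord i j (2 * M i j)).reverse)) : ZMod 2) = 0 := by
    rw [cs.leftInvSeq_reverse, List.count_reverse, count_ris_alt]
    have h2 : 2 * M i j = M i j + M i j := by omega
    rw [h2, List.range_add, List.map_append, List.count_append, List.map_map]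
    have hmap : (List.map ((fun k => (s j * s i) ^ k * s j) ∘ (fun x => M i j + x))
        (List.range (M i j))) = List.map (fun k => (s j * s i) ^ k * s j)
          (List.range (M i j)) := by
      apply List.map_congr_left
      intro k _
      simp only [Function.comp_apply]
      rw [pow_add, cs.simple_mul_simple_pow' i j, one_mul]
    rw [hmap]
    push_cast
    ring_nf
    rw [(by ring : (List.count t (List.map (fun k => (s j * s i) ^ k * s j)
      (List.range (M i j))) : ZMod 2) * 2
        = (List.count t (List.map (fun k => (s j * s i) ^ k * s j)
      (List.range (M i j))) : ZMod 2) * (2 : ZMod 2)), (by decide : (2 : ZMod 2) = 0), mul_zero]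
  rw [hprod, hcount, add_zero]
  simp

/-- The permutation representation of the Coxeter group. -/
noncomputable def phi : W →* Equiv.Perm (W × ZMod 2) := cs.lift ⟨fp cs, lift_cond cs⟩

lemma phi_wordProd (ω : List B) : phi cs (π ω) = (List.map (fp cs) ω).prod := by
  unfold CoxeterSystem.wordProd
  rw [MonoidHom.map_list_prod, List.map_map]
  congr 1
  apply List.map_congr_left
  intro k _
  simp only [Function.comp_apply]
  exact cs.lift_apply_simple (lift_cond cs) k

lemma count_welldef {ω ω' : List B} (h : π ω = π ω') (t : W) :
    (List.count t (cs.leftInvSeq ω) : ZMod 2) = List.count t (cs.leftInvSeq ω') := by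
  have e1 := eval cs ω t 0
  have e2 := eval cs ω' t 0
  rw [← phi_wordProd cs ω.reverse] at e1
  rw [← phi_wordProd cs ω'.reverse] at e2
  rw [cs.wordProd_reverse] at e1 e2
  rw [h] at e1
  have := e1.symm.trans e2
  have h2 := congrArg Prod.snd this
  simpa using h2

lemma count_eq_zero_of_ascent :
    ∀ (n : ℕ) (w : W), ℓ w = n → ∀ (t : W), cs.IsReflection t → ℓ w < ℓ (t * w) →
      ∀ ω, π ω = w → (List.count t (cs.leftInvSeq ω) : ZMod 2) = 0 := by
  intro n
  induction n using Nat.strong_induction_on with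
  | _ n IH =>
    intro w hn t ht hasc ω hω
    rcases eq_or_ne w 1 with h1 | h1
    · have : (List.count t (cs.leftInvSeq ω) : ZMod 2)
          = List.count t (cs.leftInvSeq ([] : List B)) := by
        apply count_welldef
        rw [hω, cs.wordProd_nil, h1]
      rw [this]
      simp
    · obtain ⟨k, hk⟩ := cs.exists_leftDescent_of_ne_one h1
      have hk' : ℓ (s k * w) + 1 = ℓ w := cs.isLeftDescent_iff.mp hk
      have htk : t ≠ s k := by
        intro h
        rw [h] at hasc
        exact absurd hasc (by omega)
      set w' := s k * w with hw'
      obtain ⟨ω', hred', hω'⟩ := cs.exists_reduced_word' w'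
      have hπ : π (k :: ω') = w := by
        rw [cs.wordProd_cons, ← hω', hw', cs.simple_mul_simple_cancel_left]
      have hwd := count_welldef cs (hω.trans hπ.symm) t
      rw [hwd]
      have hcons : cs.leftInvSeq (k :: ω')
          = s k :: List.map (MulAut.conj (s k)) (cs.leftInvSeq ω') := rfl
      have hconj : t = (MulAut.conj (s k)) (s k * t * s k) := by
        simp only [MulAut.conj_apply, cs.inv_simple]
        rw [conj_conj]
      have hcnt : List.count t (cs.leftInvSeq (k :: ω'))
          = List.count (s k * t * s k) (cs.leftInvSeq ω') := by
        rw [hcons, List.count_cons, if_neg (by simpa [beq_iff_eq] using htk.symm)]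
        rw [hconj, List.count_map_of_injective _ _ (MulAut.conj (s k)).injective, ← hconj]
        simp
      rw [hcnt]
      -- apply IH
      have ht' : cs.IsReflection (s k * t * s k) := by
        have := ht.conj (s k)
        rwa [cs.inv_simple] at this
      have hasc' : ℓ w' < ℓ ((s k * t * s k) * w') := by
        have htw : ℓ w + 1 ≤ ℓ (t * w) := hasc
        have he : (s k * t * s k) * w' = s k * (t * w) := by
          rw [hw']
          rw [mul_assoc, cs.simple_mul_simple_cancel_left, mul_assoc]
        rw [he]
        have := cs.length_simple_mul (t * w) k
        have hlw' : ℓ w' + 1 = ℓ w := hk'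
        omega
      exact IH (ℓ w') (by omega) w' rfl _ ht' hasc' ω' hω'.symm

lemma mem_leftInvSeq_of_descent {ω : List B} {i : B}
    (h : ℓ (s i * π ω) < ℓ (π ω)) : s i ∈ cs.leftInvSeq ω := by
  set w := π ω with hw
  set w' := s i * w with hw'
  obtain ⟨ω', hred', hω'⟩ := cs.exists_reduced_word' w'
  have hπ : π (i :: ω') = w := by
    rw [cs.wordProd_cons, ← hω', hw', cs.simple_mul_simple_cancel_left]
  have hwd := count_welldef cs (hπ.symm : π ω = π (i :: ω')) (s i)
  have hcons : cs.leftInvSeq (i :: ω')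
      = s i :: List.map (MulAut.conj (s i)) (cs.leftInvSeq ω') := rfl
  have hselfconj : (MulAut.conj (s i)) (s i) = s i := by
    simp only [MulAut.conj_apply, cs.inv_simple]
    rw [conj_eq_simple_iff]
  have hcnt : List.count (s i) (cs.leftInvSeq (i :: ω'))
      = List.count (s i) (cs.leftInvSeq ω') + 1 := by
    rw [hcons, List.count_cons, if_pos (by simp)]
    congr 1
    have h5 := List.count_map_of_injective (cs.leftInvSeq ω') _
      (MulAut.conj (s i)).injective (s i)
    rw [hselfconj] at h5
    exact h5
  have hz : (List.count (s i) (cs.leftInvSeq ω') : ZMod 2) = 0 := by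
    apply count_eq_zero_of_ascent cs (ℓ w') w' rfl (s i) (cs.isReflection_simple i)
    · have : s i * w' = w := by
        rw [hw', cs.simple_mul_simple_cancel_left]
      rw [this]
      have := cs.length_simple_mul w i
      omega
    · exact hω'.symm
  have hone : (List.count (s i) (cs.leftInvSeq ω) : ZMod 2) = 1 := by
    rw [hwd, hcnt]
    push_cast
    rw [hz, zero_add]
  by_contra hmem
  rw [List.count_eq_zero_of_not_mem hmem] at hone
  simp at hone

/-- Left exchange property for simple reflections. -/
lemma simple_left_exchange {ω : List B} {i : B}
    (h : ℓ (s i * π ω) < ℓ (π ω)) :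
    ∃ k, k < ω.length ∧ s i * π ω = π (ω.eraseIdx k) := by
  have hmem := mem_leftInvSeq_of_descent cs (ω := ω) (i := i) h
  obtain ⟨k, hk, hget⟩ := List.getElem_of_mem hmem
  refine ⟨k, by simpa using hk, ?_⟩
  have := cs.getD_leftInvSeq_mul_wordProd ω k
  rw [List.getD_eq_getElem _ _ hk, hget] at this
  exact this

/-- Deletion property. -/
lemma deletion : ∀ ω : List B, ¬ cs.IsReduced ω →
    ∃ ω' : List B, π ω' = π ω ∧ ω'.length + 2 = ω.length ∧ ∀ x ∈ ω', x ∈ ω := by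
  intro ω
  induction ω with
  | nil => intro h; exact absurd (by simp [CoxeterSystem.IsReduced]) h
  | cons i ω ih =>
    intro h
    by_cases hred : cs.IsReduced ω
    · have hlen : ℓ (π (i :: ω)) ≠ (i :: ω).length := h
      have hco : π (i :: ω) = s i * π ω := cs.wordProd_cons i ω
      have hdesc : ℓ (s i * π ω) < ℓ (π ω) := by
        have hd := cs.length_simple_mul (π ω) i
        have hle := cs.length_wordProd_le (i :: ω)
        rcases hd with hd | hd
        · exfalso
          apply hlen
          rw [hco, hd, hred]
          simp
        · have := hred
          unfold CoxeterSystem.IsReduced at this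
          omega
      obtain ⟨k, hk, hek⟩ := simple_left_exchange cs hdesc
      refine ⟨ω.eraseIdx k, ?_, ?_, ?_⟩
      · rw [← hek, hco]
      · have := List.length_eraseIdx_add_one (l := ω) (i := k) hk
        simp only [List.length_cons]
        omega
      · intro x hx
        exact List.mem_cons_of_mem i (List.eraseIdx_subset hx)
    · obtain ⟨ω', h1, h2, h3⟩ := ih hred
      refine ⟨i :: ω', ?_, ?_, ?_⟩
      · rw [cs.wordProd_cons, cs.wordProd_cons, h1]
      · simpa using h2
      · intro x hx
        rcases List.mem_cons.mp hx with rfl | hx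
        · exact List.mem_cons_self
        · exact List.mem_cons_of_mem i (h3 x hx)

lemma exists_word_in (J : Set B) {w : W} (hw : w ∈ Subgroup.closure (cs.simple '' J)) :
    ∃ ω : List B, (∀ x ∈ ω, x ∈ J) ∧ π ω = w := by
  induction hw using Subgroup.closure_induction with
  | mem x hx =>
    obtain ⟨j, hj, rfl⟩ := hx
    exact ⟨[j], by simpa using hj, by simp⟩
  | one => exact ⟨[], by simp, by simp⟩
  | mul x y hx hy ihx ihy =>
    obtain ⟨ωx, h1, h2⟩ := ihx
    obtain ⟨ωy, h3, h4⟩ := ihy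
    refine ⟨ωx ++ ωy, ?_, by rw [cs.wordProd_append, h2, h4]⟩
    intro z hz
    rcases List.mem_append.mp hz with hz | hz
    · exact h1 z hz
    · exact h3 z hz
  | inv x hx ihx =>
    obtain ⟨ωx, h1, h2⟩ := ihx
    refine ⟨ωx.reverse, ?_, by rw [cs.wordProd_reverse, h2]⟩
    intro z hz
    exact h1 z (List.mem_reverse.mp hz)

lemma exists_reduced_word_in (J : Set B) {w : W}
    (hw : w ∈ Subgroup.closure (cs.simple '' J)) :
    ∃ ω : List B, (∀ x ∈ ω, x ∈ J) ∧ π ω = w ∧ cs.IsReduced ω := by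
  obtain ⟨ω, hJ, hπ⟩ := exists_word_in cs J hw
  clear hw
  suffices H : ∀ (n : ℕ) (ω : List B), ω.length = n → (∀ x ∈ ω, x ∈ J) →
      ∃ ω' : List B, (∀ x ∈ ω', x ∈ J) ∧ π ω' = π ω ∧ cs.IsReduced ω' by
    obtain ⟨ω', h1, h2, h3⟩ := H ω.length ω rfl hJ
    exact ⟨ω', h1, h2.trans hπ, h3⟩
  intro n
  induction n using Nat.strong_induction_on with
  | _ n IH =>
    intro ω hlen hJω
    by_cases hred : cs.IsReduced ω
    · exact ⟨ω, hJω, rfl, hred⟩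
    · obtain ⟨ω', h1, h2, h3⟩ := deletion cs ω hred
      obtain ⟨ω'', h4, h5, h6⟩ := IH ω'.length (by omega) ω' rfl
        (fun x hx => hJω x (h3 x hx))
      exact ⟨ω'', h4, h5.trans h1, h6⟩

lemma rweak_one_le (w : W) : rweakLE cs 1 w := by simp [rweakLE]

lemma rweak_length_le {u w : W} (h : rweakLE cs u w) : ℓ u ≤ ℓ w := by
  unfold rweakLE at h
  omega

lemma rweak_antisymm {u w : W} (h1 : rweakLE cs u w) (h2 : rweakLE cs w u) : u = w := by
  unfold rweakLE at h1 h2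
  have hz : ℓ (u⁻¹ * w) = 0 := by omega
  have := cs.length_eq_zero_iff.mp hz
  have := inv_mul_eq_one.mp this
  exact this

lemma lifting {u w : W} {i : B} (h : rweakLE cs u w) (hdw : ℓ (s i * w) < ℓ w)
    (hdu : ℓ u < ℓ (s i * u)) : rweakLE cs (s i * u) w := by
  obtain ⟨ω₁, hl1, hu⟩ : ∃ ω : List B, ω.length = ℓ u ∧ u = π ω := by
    obtain ⟨ω, h, e⟩ := cs.exists_isReduced u; exact ⟨ω, by rw [e]; exact h.symm, e⟩
  obtain ⟨ω₂, hl2, hx⟩ : ∃ ω : List B, ω.length = ℓ (u⁻¹ * w) ∧ u⁻¹ * w = π ω := by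
    obtain ⟨ω, h, e⟩ := cs.exists_isReduced (u⁻¹ * w); exact ⟨ω, by rw [e]; exact h.symm, e⟩
  have hπ : π (ω₁ ++ ω₂) = w := by
    rw [cs.wordProd_append, ← hu, ← hx, mul_inv_cancel_left]
  have hdw' : ℓ (s i * π (ω₁ ++ ω₂)) < ℓ (π (ω₁ ++ ω₂)) := by rw [hπ]; exact hdw
  obtain ⟨k, hk, he⟩ := simple_left_exchange cs hdw'
  rw [hπ] at he
  rw [List.length_append] at hk
  have hsiu : ℓ (s i * u) = ℓ u + 1 := by
    have := cs.length_simple_mul u i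
    omega
  rcases lt_or_ge k ω₁.length with hlt | hge
  · exfalso
    rw [List.eraseIdx_append_of_lt_length hlt, cs.wordProd_append, ← hx] at he
    have h9 : s i * u = π (ω₁.eraseIdx k) := by
      have : s i * u * (u⁻¹ * w) = π (ω₁.eraseIdx k) * (u⁻¹ * w) := by
        rw [← he, mul_assoc, mul_inv_cancel_left]
      exact mul_right_cancel this
    have hlen : ℓ (s i * u) ≤ (ω₁.eraseIdx k).length := by
      rw [h9]; exact cs.length_wordProd_le _
    have := List.length_eraseIdx_add_one (l := ω₁) (i := k) hlt
    omega
  · rw [List.eraseIdx_append_of_length_le hge, cs.wordProd_append, ← hu] at he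
    have hz : (s i * u)⁻¹ * w = π (ω₂.eraseIdx (k - ω₁.length)) := by
      rw [mul_inv_rev, cs.inv_simple, mul_assoc, he, inv_mul_cancel_left]
    have hk2 : k - ω₁.length < ω₂.length := by omega
    have hlen2 : ℓ ((s i * u)⁻¹ * w) ≤ (ω₂.eraseIdx (k - ω₁.length)).length := by
      rw [hz]; exact cs.length_wordProd_le _
    have hle := List.length_eraseIdx_add_one (l := ω₂) (i := k - ω₁.length) hk2
    have htri : ℓ w ≤ ℓ (s i * u) + ℓ ((s i * u)⁻¹ * w) := by
      have := cs.length_mul_le (s i * u) ((s i * u)⁻¹ * w)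
      rwa [mul_inv_cancel_left] at this
    unfold rweakLE at h ⊢
    omega

lemma simple_mem_parabolic {J : Set B} {j : B} (hj : j ∈ J) : s j ∈ parabolic cs J :=
  Subgroup.subset_closure ⟨j, hj, rfl⟩

lemma descent_in_J {J : Set B} {v : W} (hv : v ∈ parabolic cs J) (hne : v ≠ 1) :
    ∃ j ∈ J, ℓ (s j * v) < ℓ v := by
  obtain ⟨ω, hJ, hπ, hred⟩ := exists_reduced_word_in cs J hv
  cases ω with
  | nil =>
    exfalso
    apply hne
    rw [← hπ, cs.wordProd_nil]
  | cons i ω' =>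
    refine ⟨i, hJ i List.mem_cons_self, ?_⟩
    have hsv : s i * v = π ω' := by
      rw [← hπ, cs.wordProd_cons, cs.simple_mul_simple_cancel_left]
    have hle : ℓ (s i * v) ≤ ω'.length := by
      rw [hsv]; exact cs.length_wordProd_le _
    have : ℓ v = ω'.length + 1 := by
      rw [← hπ, hred]
      simp
    omega

lemma exists_top {J : Set B} {w : W} (hw : ∀ j ∈ J, ℓ (s j * w) < ℓ w) :
    ∃ u, u ∈ parabolic cs J ∧ rweakLE cs u w ∧ ∀ j ∈ J, ℓ (s j * u) < ℓ u := by
  set P : ℕ → Prop := fun n => ∃ v, v ∈ parabolic cs J ∧ rweakLE cs v w ∧ ℓ v = n with hP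
  have hP0 : P 0 := ⟨1, one_mem _, rweak_one_le cs w, cs.length_one⟩
  have hm : P (Nat.findGreatest P (ℓ w)) := Nat.findGreatest_spec (Nat.zero_le _) hP0
  obtain ⟨u, hu, huw, hul⟩ := hm
  refine ⟨u, hu, huw, ?_⟩
  intro j hj
  by_contra hnd
  have hasc : ℓ u < ℓ (s j * u) := by
    have := cs.length_simple_mul u j
    omega
  have h1 : rweakLE cs (s j * u) w := lifting cs huw (hw j hj) hasc
  have h2 : s j * u ∈ parabolic cs J := mul_mem (simple_mem_parabolic cs hj) hu
  have h3 : P (ℓ (s j * u)) := ⟨s j * u, h2, h1, rfl⟩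
  have h4 : ℓ (s j * u) ≤ Nat.findGreatest P (ℓ w) :=
    Nat.le_findGreatest (rweak_length_le cs h1) h3
  omega

lemma below_top {J : Set B} {u : W} (hu : u ∈ parabolic cs J)
    (hd : ∀ j ∈ J, ℓ (s j * u) < ℓ u) :
    ∀ v ∈ parabolic cs J, rweakLE cs v u := by
  suffices H : ∀ (n : ℕ) (v : W), ℓ v = n → v ∈ parabolic cs J → rweakLE cs v u by
    intro v hv
    exact H (ℓ v) v rfl hv
  intro n
  induction n using Nat.strong_induction_on with
  | _ n IH =>
    intro v hn hv
    rcases eq_or_ne v 1 with rfl | hne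
    · exact rweak_one_le cs u
    · obtain ⟨j, hj, hjd⟩ := descent_in_J cs hv hne
      have hv' : s j * v ∈ parabolic cs J := mul_mem (simple_mem_parabolic cs hj) hv
      have hih : rweakLE cs (s j * v) u := IH (ℓ (s j * v)) (by omega) _ rfl hv'
      have hasc : ℓ (s j * v) < ℓ (s j * (s j * v)) := by
        rw [cs.simple_mul_simple_cancel_left]
        exact hjd
      have := lifting cs hih (hd j hj) hasc
      rwa [cs.simple_mul_simple_cancel_left] at this

lemma finite_downset (u : W) : {v : W | rweakLE cs v u}.Finite := by
  suffices H : ∀ (n : ℕ) (u : W), ℓ u = n → {v : W | rweakLE cs v u}.Finite by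
    exact H (ℓ u) u rfl
  intro n
  induction n using Nat.strong_induction_on with
  | _ n IH =>
    intro u hn
    set D : Set W := (fun i => u * s i) '' {i : B | cs.IsRightDescent u i} with hD
    have hDfin : D.Finite := by
      rcases eq_or_ne u 1 with rfl | hne
      · have : D ⊆ ∅ := by
          rintro x ⟨i, hi, rfl⟩
          exact absurd hi (cs.not_isRightDescent_one i)
        exact Set.Finite.subset (Set.finite_empty) this
      · obtain ⟨ω, hred, hω⟩ := cs.exists_reduced_word' u⁻¹
        have hsub : D ⊆ (fun k => (π (ω.eraseIdx k))⁻¹) '' (Set.Iio ω.length) := by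
          rintro x ⟨i, hi, rfl⟩
          have hld : ℓ (s i * π ω) < ℓ (π ω) := by
            rw [← hω]
            have h1 : s i * u⁻¹ = (u * s i)⁻¹ := by
              rw [mul_inv_rev, cs.inv_simple]
            rw [h1, cs.length_inv, cs.length_inv]
            exact hi
          obtain ⟨k, hk, he⟩ := simple_left_exchange cs hld
          refine ⟨k, hk, ?_⟩
          simp only
          rw [← he, ← hω, mul_inv_rev, cs.inv_simple, inv_inv]
        exact Set.Finite.subset (Set.Finite.image _ (Set.finite_Iio _)) hsub
    have hsub : {v : W | rweakLE cs v u} ⊆ {u} ∪ ⋃ x ∈ D, {v : W | rweakLE cs v x} := by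
      intro v hv
      rcases eq_or_ne v u with rfl | hne
      · exact Set.mem_union_left _ rfl
      · have hx1 : v⁻¹ * u ≠ 1 := by
          intro h
          exact hne (inv_mul_eq_one.mp h)
        obtain ⟨i, hi⟩ := cs.exists_rightDescent_of_ne_one hx1
        have hi' : ℓ (v⁻¹ * u * s i) + 1 = ℓ (v⁻¹ * u) := cs.isRightDescent_iff.mp hi
        have hvu : ℓ v + ℓ (v⁻¹ * u) = ℓ u := hv
        have he1 : u * s i = v * (v⁻¹ * u * s i) := by group
        have hle : ℓ (u * s i) ≤ ℓ v + ℓ (v⁻¹ * u * s i) := by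
          rw [he1]
          exact cs.length_mul_le _ _
        have hge : ℓ u ≤ ℓ (u * s i) + 1 := by
          have := cs.length_mul_simple u i
          omega
        have heq : ℓ (u * s i) = ℓ v + ℓ (v⁻¹ * u * s i) := by omega
        have hrd : cs.IsRightDescent u i := by
          unfold CoxeterSystem.IsRightDescent
          omega
        have hrv : rweakLE cs v (u * s i) := by
          unfold rweakLE
          rw [← mul_assoc]
          omega
        apply Set.mem_union_right
        exact Set.mem_biUnion ⟨i, hrd, rfl⟩ hrv
    apply Set.Finite.subset _ hsub
    apply Set.Finite.union (Set.finite_singleton u)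
    apply Set.Finite.biUnion hDfin
    rintro x ⟨i, hi, rfl⟩
    apply IH (ℓ (u * s i)) _ _ rfl
    have : ℓ (u * s i) < ℓ u := hi
    omega

lemma rweak_simple_iff {j : B} {w : W} :
    rweakLE cs (s j) w ↔ ℓ (s j * w) < ℓ w := by
  unfold rweakLE
  rw [cs.length_simple, cs.inv_simple]
  have := cs.length_simple_mul w j
  omega

lemma main (J : Set B) (w : W) :
    ((w ∈ parabolic cs J ∧ ∀ u ∈ parabolic cs J, ℓ u ≤ ℓ w) ∧ (parabolic cs J : Set W).Finite)
    ↔ ((∀ j ∈ J, rweakLE cs (s j) w) ∧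
        ∀ w' : W, (∀ j ∈ J, rweakLE cs (s j) w') → rweakLE cs w w') := by
  constructor
  · rintro ⟨⟨hwmem, hwmax⟩, _hfin⟩
    have hdesc : ∀ j ∈ J, ℓ (s j * w) < ℓ w := by
      intro j hj
      have h1 : s j * w ∈ parabolic cs J := mul_mem (simple_mem_parabolic cs hj) hwmem
      have h2 : ℓ (s j * w) ≤ ℓ w := hwmax _ h1
      have h3 := cs.length_simple_mul w j
      have h4 := cs.length_simple_mul_ne w j
      omega
    constructor
    · intro j hj
      exact (rweak_simple_iff cs).mpr (hdesc j hj)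
    · intro w' hw'
      have hw'd : ∀ j ∈ J, ℓ (s j * w') < ℓ w' := fun j hj =>
        (rweak_simple_iff cs).mp (hw' j hj)
      obtain ⟨u, humem, huw', hud⟩ := exists_top cs hw'd
      have h5 : rweakLE cs w u := below_top cs humem hud w hwmem
      have h6 : ℓ u ≤ ℓ w := hwmax u humem
      have h7 : w = u := by
        unfold rweakLE at h5
        have hz : ℓ (w⁻¹ * u) = 0 := by omega
        exact inv_mul_eq_one.mp (cs.length_eq_zero_iff.mp hz)
      rw [h7]
      exact huw'
  · rintro ⟨hub, hmin⟩
    have hdesc : ∀ j ∈ J, ℓ (s j * w) < ℓ w := fun j hj =>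
      (rweak_simple_iff cs).mp (hub j hj)
    obtain ⟨u, humem, huw, hud⟩ := exists_top cs hdesc
    have husimp : ∀ j ∈ J, rweakLE cs (s j) u := fun j hj =>
      below_top cs humem hud _ (simple_mem_parabolic cs hj)
    have hwu : rweakLE cs w u := hmin u husimp
    have hweq : u = w := rweak_antisymm cs huw hwu
    rw [← hweq]
    refine ⟨⟨humem, fun v hv => rweak_length_le cs (below_top cs humem hud v hv)⟩, ?_⟩
    apply Set.Finite.subset (finite_downset cs u)
    intro v hv
    exact below_top cs humem hud v hv

end StrongExchangeAux

/-- In a Coxeter group, `w` is the longest element of a finite standard parabolic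
subgroup `W_J` iff the join of `{s_j : j ∈ J}` in right weak order exists and equals
`w`; the join of the simple reflections in `J` exists iff `W_J` is finite; and if
`W_J` is infinite then `{s_j : j ∈ J}` has no upper bound in weak order. -/
theorem stmt_3 {B W : Type*} [Group W] {M : CoxeterMatrix B}
    (cs : CoxeterSystem M W) (J : Set B) :
    (∀ w : W,
      (((w ∈ parabolic cs J ∧ ∀ u ∈ parabolic cs J, cs.length u ≤ cs.length w) ∧
          (parabolic cs J : Set W).Finite)
        ↔ ((∀ j ∈ J, rweakLE cs (cs.simple j) w) ∧
            ∀ w' : W, (∀ j ∈ J, rweakLE cs (cs.simple j) w') → rweakLE cs w w'))) ∧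
    ((parabolic cs J : Set W).Finite ↔
      ∃ w : W, (∀ j ∈ J, rweakLE cs (cs.simple j) w) ∧
        ∀ w' : W, (∀ j ∈ J, rweakLE cs (cs.simple j) w') → rweakLE cs w w') ∧
    (¬ (parabolic cs J : Set W).Finite →
      ∀ w : W, ¬ ∀ j ∈ J, rweakLE cs (cs.simple j) w) := by
  refine ⟨fun w => StrongExchangeAux.main cs J w, ⟨?_, ?_⟩, ?_⟩
  · intro hfin
    have hne : (parabolic cs J : Set W).Nonempty := ⟨1, by exact one_mem _⟩
    obtain ⟨w, hwmem, hwmax⟩ := Set.exists_max_image _ cs.length hfin hne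
    refine ⟨w, (StrongExchangeAux.main cs J w).mp ⟨⟨hwmem, fun u hu => hwmax u hu⟩, hfin⟩⟩
  · rintro ⟨w, hQ⟩
    exact ((StrongExchangeAux.main cs J w).mpr hQ).2
  · intro hinf w hub
    apply hinf
    have hdesc : ∀ j ∈ J, cs.length (cs.simple j * w) < cs.length w := fun j hj =>
      (StrongExchangeAux.rweak_simple_iff cs).mp (hub j hj)
    obtain ⟨u, humem, _huw, hud⟩ := StrongExchangeAux.exists_top cs hdesc
    apply Set.Finite.subset (StrongExchangeAux.finite_downset cs u)
    intro v hv
    exact StrongExchangeAux.below_top cs humem hud v hv
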